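/- The functions w ≡ 1, R(ρ) = √G sin(ρ/√G), γ(ρ) = (2/√G) tan(ρ/√G), L(ρ) = cos(ρ/√G) satisfy the system ẅ = w(w²-1)/R² + (1/2)ẇγ, R̈ = -(1/2)Ṙγ - Gẇ²/R, γ̇ = (1/2)γ² - (2/R²)[2GV + Ṙ² - 1], L̇ = -(1/2)Lγ, with V = (w²-1)²/(2R²) and Λ = 3/(2G), for all ρ ∈ (0, √G π/2). -/

import Mathlib

open Set

theorem stmt_4 (G : ℝ) (hG : 0 < G)
    (R w L γ V : ℝ → ℝ)
    (hw : ∀ ρ : ℝ, w ρ = 1)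
    (hR : ∀ ρ : ℝ, R ρ = Real.sqrt G * Real.sin (ρ / Real.sqrt G))
    (hγ : ∀ ρ : ℝ, γ ρ = (2 / Real.sqrt G) * Real.tan (ρ / Real.sqrt G))
    (hL : ∀ ρ : ℝ, L ρ = Real.cos (ρ / Real.sqrt G))
    (hV : ∀ ρ : ℝ, V ρ = ((w ρ) ^ 2 - 1) ^ 2 / (2 * (R ρ) ^ 2)) :
    ∀ ρ ∈ Ioo 0 (Real.sqrt G * Real.pi / 2),
      deriv (deriv w) ρ = w ρ * ((w ρ) ^ 2 - 1) / (R ρ) ^ 2 + (1/2) * deriv w ρ * γ ρ ∧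
      deriv (deriv R) ρ = -(1/2) * deriv R ρ * γ ρ - G * (deriv w ρ) ^ 2 / R ρ ∧
      deriv γ ρ = (1/2) * (γ ρ) ^ 2 - (2 / (R ρ) ^ 2) * (2 * G * V ρ + (deriv R ρ) ^ 2 - 1) ∧
      deriv L ρ = -(1/2) * L ρ * γ ρ := by
  have hs : (0:ℝ) < Real.sqrt G := Real.sqrt_pos.mpr hG
  set s := Real.sqrt G with hsdef
  have hs2 : s ^ 2 = G := Real.sq_sqrt hG.le
  have hw' : w = fun _ => 1 := funext hw
  have hR' : R = fun ρ => s * Real.sin (ρ / s) := funext hR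
  have hγ' : γ = fun ρ => (2 / s) * Real.tan (ρ / s) := funext hγ
  have hL' : L = fun ρ => Real.cos (ρ / s) := funext hL
  subst hw' hR' hγ' hL'
  -- global derivatives
  have hdid : ∀ t : ℝ, HasDerivAt (fun u : ℝ => u / s) (1 / s) t := fun t =>
    (hasDerivAt_id t).div_const s
  have dR : ∀ t : ℝ, HasDerivAt (fun u => s * Real.sin (u / s)) (Real.cos (t / s)) t := by
    intro t
    have h := ((Real.hasDerivAt_sin (t / s)).comp t (hdid t)).const_mul s
    have : s * (Real.cos (t / s) * (1 / s)) = Real.cos (t / s) := by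
      field_simp
    rwa [this] at h
  have dRfun : deriv (fun u => s * Real.sin (u / s)) = fun t => Real.cos (t / s) :=
    funext fun t => (dR t).deriv
  have dw : deriv (fun _ : ℝ => (1:ℝ)) = fun _ => (0:ℝ) := by
    funext t; simp
  intro ρ hρ
  obtain ⟨h1, h2⟩ := hρ
  have hx1 : 0 < ρ / s := div_pos h1 hs
  have hx2 : ρ / s < Real.pi / 2 := by
    rw [div_lt_iff₀ hs]; linarith
  have hcos : 0 < Real.cos (ρ / s) :=
    Real.cos_pos_of_mem_Ioo ⟨by linarith, hx2⟩
  have hsin : 0 < Real.sin (ρ / s) :=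
    Real.sin_pos_of_pos_of_lt_pi hx1 (by linarith [Real.pi_pos])
  have dR2 : HasDerivAt (fun t => Real.cos (t / s)) (-Real.sin (ρ / s) * (1 / s)) ρ :=
    by have h := (Real.hasDerivAt_cos (ρ / s)).comp ρ (hdid ρ); exact h
  have dγ : HasDerivAt (fun t => (2 / s) * Real.tan (t / s))
      ((2 / s) * (1 / Real.cos (ρ / s) ^ 2 * (1 / s))) ρ :=
    ((Real.hasDerivAt_tan hcos.ne').comp ρ (hdid ρ)).const_mul _
  have pyth := Real.sin_sq_add_cos_sq (ρ / s)
  refine ⟨?_, ?_, ?_, ?_⟩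
  · simp [dw]
  · rw [dRfun, dR2.deriv, dw]
    simp only [Real.tan_eq_sin_div_cos]
    field_simp
    ring
  · rw [dγ.deriv, hV, dRfun]
    simp only [Real.tan_eq_sin_div_cos, one_pow, sub_self]
    field_simp
    linear_combination (-(s ^ 2 * Real.sin (ρ / s) ^ 2 *
      (Real.sin (ρ / s) ^ 2 - Real.cos (ρ / s) ^ 2))) * pyth
  · rw [dR2.deriv]; simp only [Real.tan_eq_sin_div_cos]
    field_simp
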